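/- Define C(q) = max_{p∈[0,1]} q·H₂(p)/(q + p(1-q)) and R(q) = -q·p*(q)·log₂(p*(q))/(q + p*(q)(1-q)), where p*(q) ∈ (0,1/2] solves q = ln(1-p)/ln(p). Then lim_{q→0⁺} C(q)/R(q) = 1. -/

import Mathlib

open Real Filter Topology

section helpers

lemma aux2' {x : ℝ} (hx : 0 ≤ x) (hx1 : x ≤ 1) : (1 - x) * (-Real.log (1 - x)) ≤ x := by
  rcases eq_or_lt_of_le hx1 with h1 | h1
  · simp [← h1]; linarith
  · have h2 : 0 < 1 - x := by linarith
    have h3 : Real.log (1/(1-x)) ≤ 1/(1-x) - 1 := Real.log_le_sub_one_of_pos (by positivity)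
    rw [Real.log_div one_ne_zero (ne_of_gt h2), Real.log_one] at h3
    have h4 := mul_le_mul_of_nonneg_left h3 h2.le
    have h5 : (1 - x) * (1/(1-x)) = 1 := by field_simp
    nlinarith

lemma mono_aux' {a b : ℝ} (ha : 0 ≤ a) (hab : a ≤ b) (hb : b ≤ 1) :
    a * (1 - Real.log a) ≤ b * (1 - Real.log b) := by
  rcases eq_or_lt_of_le ha with h0 | h0
  · simp [← h0]
    nlinarith [Real.log_nonpos (le_trans ha hab) hb]
  · have hbpos : 0 < b := lt_of_lt_of_le h0 hab
    have h1 : Real.log (b / a) ≤ b / a - 1 := Real.log_le_sub_one_of_pos (by positivity)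
    rw [Real.log_div (ne_of_gt hbpos) (ne_of_gt h0)] at h1
    have hlb : Real.log b ≤ 0 := Real.log_nonpos hbpos.le hb
    have h2 := mul_le_mul_of_nonneg_left h1 h0.le
    have h3 : a * (b / a) = b := by field_simp
    nlinarith [mul_nonneg (sub_nonneg.2 hab) (neg_nonneg.2 hlb)]

lemma upper_core' {q x : ℝ} (hq : 0 < q) (hq1 : q < 1) (hx : 0 ≤ x) (hx1 : x ≤ 1) :
    q * (x * (-Real.log x) + (1-x) * (-Real.log (1-x))) / (q + x*(1-q)) ≤
      q * (1 - Real.log q) / (1-q) := by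
  have hd : 0 < q + x*(1-q) := by nlinarith
  have hlx : Real.log x ≤ 0 := Real.log_nonpos hx hx1
  have hlq : Real.log q ≤ 0 := Real.log_nonpos hq.le hq1.le
  have hA : 0 ≤ x * (1 - Real.log x) := mul_nonneg hx (by linarith)
  have hN : x * (-Real.log x) + (1-x) * (-Real.log (1-x)) ≤ x * (1 - Real.log x) := by
    have := aux2' hx hx1; nlinarith
  have step1 : q * (x * (-Real.log x) + (1-x) * (-Real.log (1-x))) / (q + x*(1-q)) ≤
      q * (x * (1 - Real.log x)) / (q + x*(1-q)) := by
    gcongr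
  refine le_trans step1 ?_
  rcases le_total x q with hxq | hqx
  · have h1 : q * (x * (1 - Real.log x)) / (q + x*(1-q)) ≤ x * (1 - Real.log x) := by
      rw [div_le_iff₀ hd]
      nlinarith [mul_nonneg hA (mul_nonneg hx (by linarith : (0:ℝ) ≤ 1-q))]
    have h2 := mono_aux' hx hxq hq1.le
    have h3 : q * (1 - Real.log q) ≤ q * (1 - Real.log q) / (1-q) := by
      rw [le_div_iff₀ (by linarith : (0:ℝ) < 1 - q)]
      nlinarith
    linarith
  · rw [div_le_div_iff₀ hd (by linarith : (0:ℝ) < 1 - q)]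
    have e1 : Real.log q ≤ Real.log x := Real.log_le_log hq hqx
    have h1 : 0 ≤ q * x * (1-q) * (Real.log x - Real.log q) := by
      apply mul_nonneg; apply mul_nonneg; apply mul_nonneg hq.le hx
      all_goals linarith
    nlinarith [h1, mul_nonneg (mul_nonneg hq.le hq.le) (by linarith : (0:ℝ) ≤ 1 - Real.log q)]

lemma upper_pt' {q x : ℝ} (hq : 0 < q) (hq1 : q < 1) (hx : 0 ≤ x) (hx1 : x ≤ 1) :
    q * (-(x * Real.logb 2 x) - (1-x) * Real.logb 2 (1-x)) / (q + x*(1-q)) ≤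
      q * (1 - Real.log q) / (1-q) / Real.log 2 := by
  have h2 : (0:ℝ) < Real.log 2 := Real.log_pos (by norm_num)
  have heq : q * (-(x * Real.logb 2 x) - (1-x) * Real.logb 2 (1-x)) / (q + x*(1-q)) =
      q * (x * (-Real.log x) + (1-x) * (-Real.log (1-x))) / (q + x*(1-q)) / Real.log 2 := by
    simp only [Real.logb, div_eq_mul_inv]
    ring
  rw [heq]
  exact div_le_div_of_nonneg_right (upper_core' hq hq1 hx hx1) h2.le

lemma lower_pt' {q x : ℝ} (hq : 0 < q) (hq1 : q < 1) (hx : 0 < x) (hx2 : x ≤ 1/2) :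
    -(q * x * Real.logb 2 x) / (q + x*(1-q)) ≤
      q * (-(x * Real.logb 2 x) - (1-x) * Real.logb 2 (1-x)) / (q + x*(1-q)) := by
  have hd : (0:ℝ) < q + x*(1-q) := by nlinarith
  have hlb : Real.logb 2 (1-x) ≤ 0 :=
    Real.logb_nonpos (by norm_num) (by linarith) (by linarith)
  apply div_le_div_of_nonneg_right ?_ hd.le
  nlinarith [mul_nonneg (mul_nonneg hq.le (by linarith : (0:ℝ) ≤ 1-x)) (neg_nonneg.2 hlb)]

lemma loglim' : Tendsto (fun y : ℝ => Real.log (y+2) / y) atTop (𝓝 0) := by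
  have h1 : Tendsto (fun y : ℝ => Real.log (y+2) / (y+2)) atTop (𝓝 0) :=
    (Real.isLittleO_log_id_atTop.tendsto_div_nhds_zero).comp
      (tendsto_atTop_add_const_right atTop 2 tendsto_id)
  have h2 : Tendsto (fun y : ℝ => (y+2) / y) atTop (𝓝 1) := by
    have h3 : Tendsto (fun y : ℝ => 1 + 2 / y) atTop (𝓝 1) := by
      have h4 := (tendsto_const_nhds (x := (2:ℝ)) (f := atTop)).div_atTop tendsto_id
      simpa using (tendsto_const_nhds (x := (1:ℝ)) (f := atTop)).add h4
    apply h3.congr'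
    filter_upwards [eventually_gt_atTop (0:ℝ)] with y hy
    field_simp
  have h5 := h1.mul h2
  rw [zero_mul] at h5
  apply h5.congr'
  filter_upwards [eventually_gt_atTop (0:ℝ)] with y hy
  have : y + 2 ≠ 0 := by linarith
  field_simp

lemma pstar_facts' {q p : ℝ} (hq : 0 < q) (hq1 : q < 1) (hp0 : 0 < p) (hp2 : p ≤ 1/2)
    (heq : q = Real.log (1-p) / Real.log p) :
    p ≤ q * (-Real.log p) ∧ q * (-Real.log p) ≤ 2*p ∧ q/3 ≤ p := by
  have hlp : Real.log p < 0 := Real.log_neg hp0 (by linarith)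
  have hmul : q * Real.log p = Real.log (1-p) := by
    rw [heq]; exact div_mul_cancel₀ _ hlp.ne
  have h1p : (0:ℝ) < 1 - p := by linarith
  have hub : -Real.log (1-p) ≤ p/(1-p) := by
    have h3 : Real.log (1/(1-p)) ≤ 1/(1-p) - 1 := Real.log_le_sub_one_of_pos (by positivity)
    rw [Real.log_div one_ne_zero h1p.ne', Real.log_one] at h3
    have h4 : 1/(1-p) - 1 = p/(1-p) := by field_simp; ring
    linarith
  have hlb : p ≤ -Real.log (1-p) := by
    have := Real.log_le_sub_one_of_pos h1p; linarith
  have hub2 : p/(1-p) ≤ 2*p := by rw [div_le_iff₀ h1p]; nlinarith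
  have f1 : p ≤ q * (-Real.log p) := by nlinarith
  have f2 : q * (-Real.log p) ≤ 2*p := by nlinarith
  refine ⟨f1, f2, ?_⟩
  have hl2 : Real.log 2 ≤ -Real.log p := by
    have h5 : Real.log p ≤ Real.log (1/2) := Real.log_le_log hp0 hp2
    rw [show (1:ℝ)/2 = 2⁻¹ by norm_num, Real.log_inv] at h5
    linarith
  have h6 : (0.6931471803:ℝ) < Real.log 2 := Real.log_two_gt_d9
  nlinarith

end helpers

theorem stmt_12 (pstar : ℝ → ℝ)
    (hpstar : ∀ q : ℝ, 0 < q → q < 1 →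
      0 < pstar q ∧ pstar q ≤ 1 / 2 ∧
        q = Real.log (1 - pstar q) / Real.log (pstar q)) :
    Filter.Tendsto
      (fun q : ℝ =>
        (⨆ p : Set.Icc (0 : ℝ) 1,
            q * (-(↑p * Real.logb 2 ↑p) - (1 - ↑p) * Real.logb 2 (1 - ↑p)) /
              (q + ↑p * (1 - q))) /
          (-(q * pstar q * Real.logb 2 (pstar q)) / (q + pstar q * (1 - q))))
      (nhdsWithin 0 (Set.Ioi 0)) (nhds 1) := by
  haveI : Nonempty (Set.Icc (0:ℝ) 1) := ⟨⟨0, le_refl 0, by norm_num⟩⟩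
  have hlog2 : (0:ℝ) < Real.log 2 := Real.log_pos (by norm_num)
  set l : Filter ℝ := nhdsWithin 0 (Set.Ioi 0) with hl
  set N : ℝ → ℝ := fun q => ⨆ p : Set.Icc (0:ℝ) 1,
      q * (-(↑p * Real.logb 2 ↑p) - (1 - ↑p) * Real.logb 2 (1 - ↑p)) / (q + ↑p * (1 - q))
    with hNdef
  set D : ℝ → ℝ := fun q => -(q * pstar q * Real.logb 2 (pstar q)) / (q + pstar q * (1 - q))
    with hDdef
  set m : ℝ → ℝ := fun q => q * (-Real.log q) / Real.log 2 with hmdef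
  -- basic limits
  have hq0 : Tendsto (fun q : ℝ => q) l (𝓝 0) := tendsto_id.mono_right nhdsWithin_le_nhds
  have hL : Tendsto (fun q : ℝ => -Real.log q) l atTop :=
    tendsto_neg_atBot_atTop.comp Real.tendsto_log_nhdsGT_zero
  have hIoo : ∀ᶠ q in l, 0 < q ∧ q < 1/2 := by
    have h : Set.Ioo (0:ℝ) (1/2) ∈ l := Ioo_mem_nhdsGT_of_mem ⟨le_refl 0, by norm_num⟩
    filter_upwards [h] with q hq
    exact ⟨hq.1, hq.2⟩
  -- sqrt smallness
  have hsm : ∀ᶠ q in l, Real.sqrt q * (-Real.log q) < 2 := by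
    have h := tendsto_log_mul_rpow_nhdsGT_zero (r := 1/2) (by norm_num)
    have h2 : ∀ᶠ q in l, |Real.log q * q ^ (1/2:ℝ)| < 2 := by
      have h3 := h.eventually (eventually_abs_sub_lt 0 (by norm_num : (0:ℝ) < 2))
      simpa using h3
    filter_upwards [h2, self_mem_nhdsWithin] with q hq2 hq0'
    have hq0'' : (0:ℝ) < q := hq0'
    have hs : Real.sqrt q = q ^ (1/2:ℝ) := Real.sqrt_eq_rpow q
    calc Real.sqrt q * (-Real.log q) = -(Real.log q * q ^ (1/2:ℝ)) := by rw [hs]; ring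
    _ ≤ |Real.log q * q ^ (1/2:ℝ)| := neg_le_abs _
    _ < 2 := hq2
  -- bundled eventual facts
  have hfacts : ∀ᶠ q in l, 0 < q ∧ q < 1/2 ∧ 0 < pstar q ∧ pstar q ≤ 1/2 ∧
      pstar q ≤ q * (-Real.log (pstar q)) ∧ q * (-Real.log (pstar q)) ≤ 2 * pstar q ∧
      q/3 ≤ pstar q ∧ pstar q ≤ Real.sqrt q := by
    filter_upwards [hIoo, hsm] with q hq12 hsq
    obtain ⟨hq, hq2⟩ := hq12
    obtain ⟨hp0, hp2, heq⟩ := hpstar q hq (by linarith)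
    obtain ⟨f1, f2, f3⟩ := pstar_facts' hq (by linarith) hp0 hp2 heq
    refine ⟨hq, hq2, hp0, hp2, f1, f2, f3, ?_⟩
    by_contra hc
    push_neg at hc
    have hsq0 : 0 < Real.sqrt q := Real.sqrt_pos.2 hq
    have h1 : -Real.log (pstar q) < -Real.log (Real.sqrt q) := by
      have := Real.log_lt_log hsq0 hc; linarith
    have h2 : Real.log (Real.sqrt q) = Real.log q / 2 := Real.log_sqrt hq.le
    have h4 : Real.sqrt q * Real.sqrt q = q := Real.mul_self_sqrt hq.le
    have e1 : q * (-Real.log (pstar q)) < q * (-Real.log q) / 2 := by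
      have h1' : -Real.log (pstar q) < (-Real.log q)/2 := by rw [h2] at h1; linarith
      calc q * (-Real.log (pstar q)) < q * ((-Real.log q)/2) :=
            mul_lt_mul_of_pos_left h1' hq
      _ = q * (-Real.log q) / 2 := by ring
    have e2 : Real.sqrt q * (Real.sqrt q * (-Real.log q)) < Real.sqrt q * 2 :=
      mul_lt_mul_of_pos_left hsq hsq0
    have e3 : Real.sqrt q * (Real.sqrt q * (-Real.log q)) = q * (-Real.log q) := by
      rw [← mul_assoc, h4]
    linarith
  -- positivity of L eventually
  have hLpos : ∀ᶠ q in l, 0 < -Real.log q := by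
    filter_upwards [hIoo] with q hq12
    have := Real.log_neg hq12.1 (by linarith [hq12.2])
    linarith
  -- T1 : q / pstar q → 0
  have hT1 : Tendsto (fun q => q / pstar q) l (𝓝 0) := by
    have hub : ∀ᶠ q in l, q / pstar q ≤ 4 / (-Real.log q) := by
      filter_upwards [hfacts, hLpos] with q hf hLq
      obtain ⟨hq, hq2, hp0, hp2, f1, f2, f3, f4⟩ := hf
      have h1 : Real.log (pstar q) ≤ Real.log q / 2 := by
        have := Real.log_le_log hp0 f4
        rwa [Real.log_sqrt hq.le] at this
      rw [div_le_div_iff₀ hp0 hLq]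
      nlinarith
    have hlbd : ∀ᶠ q in l, 0 ≤ q / pstar q := by
      filter_upwards [hfacts] with q hf
      have := hf.1; have := hf.2.2.1
      positivity
    have h4L : Tendsto (fun q => 4 / (-Real.log q)) l (𝓝 0) :=
      (tendsto_const_nhds (x := (4:ℝ))).div_atTop hL
    exact tendsto_of_tendsto_of_tendsto_of_le_of_le' tendsto_const_nhds h4L hlbd hub
  -- T3 : pstar q / (q + pstar q (1-q)) → 1
  have hT3 : Tendsto (fun q => pstar q / (q + pstar q * (1-q))) l (𝓝 1) := by
    have hsum : Tendsto (fun q => q / pstar q + (1 - q)) l (𝓝 1) := by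
      have h := hT1.add ((tendsto_const_nhds (x := (1:ℝ))).sub hq0)
      simpa using h
    have hinv := hsum.inv₀ one_ne_zero
    rw [inv_one] at hinv
    apply hinv.congr'
    filter_upwards [hfacts] with q hf
    obtain ⟨hq, hq2, hp0, hp2, -, -, -, -⟩ := hf
    have hd : 0 < q + pstar q * (1-q) := by nlinarith
    have he : q / pstar q + (1-q) = (q + pstar q * (1-q)) / pstar q := by
      field_simp
    rw [he, inv_div]
  -- T2 : (-log pstar q)/(-log q) → 1
  have hT2 : Tendsto (fun q => (-Real.log (pstar q)) / (-Real.log q)) l (𝓝 1) := by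
    have hup : Tendsto (fun q : ℝ => 1 + 2 / (-Real.log q)) l (𝓝 1) := by
      have h := ((tendsto_const_nhds (x := (2:ℝ))).div_atTop hL)
      simpa using (tendsto_const_nhds (x := (1:ℝ))).add h
    have hlo : Tendsto (fun q : ℝ => 1 - Real.log ((-Real.log q) + 2) / (-Real.log q)) l (𝓝 1) := by
      have h := loglim'.comp hL
      simpa using (tendsto_const_nhds (x := (1:ℝ))).sub h
    apply tendsto_of_tendsto_of_tendsto_of_le_of_le' hlo hup
    · -- lower bound eventually
      filter_upwards [hfacts, hLpos] with q hf hLq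
      obtain ⟨hq, hq2, hp0, hp2, f1, f2, f3, f4⟩ := hf
      have hl3 : Real.log 3 ≤ 2 := by
        have := Real.log_le_sub_one_of_pos (by norm_num : (0:ℝ) < 3); linarith
      have hq3 : Real.log (q/3) ≤ Real.log (pstar q) := Real.log_le_log (by positivity) f3
      have hq3' : Real.log (q/3) = Real.log q - Real.log 3 :=
        Real.log_div hq.ne' (by norm_num)
      have hLp_ub : -Real.log (pstar q) ≤ (-Real.log q) + 2 := by
        rw [hq3'] at hq3; linarith
      -- p ≤ q * (L + 2)
      have hple : pstar q ≤ q * ((-Real.log q) + 2) := by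
        calc pstar q ≤ q * (-Real.log (pstar q)) := f1
        _ ≤ q * ((-Real.log q) + 2) := by nlinarith
      have hlogple : Real.log (pstar q) ≤ Real.log q + Real.log ((-Real.log q) + 2) := by
        have h7 : Real.log (pstar q) ≤ Real.log (q * ((-Real.log q) + 2)) :=
          Real.log_le_log hp0 hple
        rwa [Real.log_mul hq.ne' (by linarith : (-Real.log q) + 2 ≠ 0)] at h7
      have e : 1 - Real.log ((-Real.log q)+2)/(-Real.log q) =
          ((-Real.log q) - Real.log ((-Real.log q)+2))/(-Real.log q) := by
        rw [sub_div, div_self hLq.ne']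
      rw [e]
      apply div_le_div_of_nonneg_right _ hLq.le
      linarith [hlogple]
    · -- upper bound eventually
      filter_upwards [hfacts, hLpos] with q hf hLq
      obtain ⟨hq, hq2, hp0, hp2, f1, f2, f3, f4⟩ := hf
      have hl3 : Real.log 3 ≤ 2 := by
        have := Real.log_le_sub_one_of_pos (by norm_num : (0:ℝ) < 3); linarith
      have hq3 : Real.log (q/3) ≤ Real.log (pstar q) := Real.log_le_log (by positivity) f3
      have hq3' : Real.log (q/3) = Real.log q - Real.log 3 :=
        Real.log_div hq.ne' (by norm_num)
      have hLp_ub : -Real.log (pstar q) ≤ (-Real.log q) + 2 := by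
        rw [hq3'] at hq3; linarith
      rw [div_le_iff₀ hLq, add_mul, one_mul, div_mul_cancel₀ _ hLq.ne']
      exact hLp_ub
  -- hB : D/m → 1
  have hB : Tendsto (fun q => D q / m q) l (𝓝 1) := by
    have h := hT2.mul hT3
    rw [mul_one] at h
    apply h.congr'
    filter_upwards [hfacts, hLpos] with q hf hLq
    obtain ⟨hq, hq2, hp0, hp2, -, -, -, -⟩ := hf
    have hd : 0 < q + pstar q * (1-q) := by nlinarith
    have hlq : Real.log q ≠ 0 := (show Real.log q < 0 by linarith).ne
    rw [hDdef, hmdef]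
    simp only [Real.logb]
    rw [eq_comm]
    field_simp
  -- N bounds
  have hNU : ∀ᶠ q in l, N q ≤ q * (1 - Real.log q) / (1-q) / Real.log 2 := by
    filter_upwards [hIoo] with q hq12
    obtain ⟨hq, hq2⟩ := hq12
    rw [hNdef]
    apply ciSup_le
    rintro ⟨x, hx0, hx1⟩
    exact upper_pt' hq (by linarith) hx0 hx1
  have hDN : ∀ᶠ q in l, D q ≤ N q := by
    filter_upwards [hfacts] with q hf
    obtain ⟨hq, hq2, hp0, hp2, -, -, -, -⟩ := hf
    have hbdd : BddAbove (Set.range fun p : Set.Icc (0:ℝ) 1 =>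
        q * (-(↑p * Real.logb 2 ↑p) - (1 - ↑p) * Real.logb 2 (1 - ↑p)) / (q + ↑p * (1 - q))) := by
      refine ⟨q * (1 - Real.log q) / (1-q) / Real.log 2, ?_⟩
      rintro y ⟨⟨x, hx0, hx1⟩, rfl⟩
      exact upper_pt' hq (by linarith) hx0 hx1
    have hmem : pstar q ∈ Set.Icc (0:ℝ) 1 := ⟨hp0.le, by linarith⟩
    have hle := le_ciSup hbdd ⟨pstar q, hmem⟩
    refine le_trans ?_ hle
    exact lower_pt' hq (by linarith) hp0 hp2
  -- m positive eventually
  have hmpos : ∀ᶠ q in l, 0 < m q := by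
    filter_upwards [hIoo, hLpos] with q hq12 hLq
    rw [hmdef]
    exact div_pos (mul_pos hq12.1 hLq) hlog2
  -- hU : U/m → 1
  have hU : Tendsto (fun q => (q * (1 - Real.log q) / (1-q) / Real.log 2) / m q) l (𝓝 1) := by
    have h1 : Tendsto (fun q : ℝ => (1/(-Real.log q) + 1) * (1-q)⁻¹) l (𝓝 1) := by
      have h2 : Tendsto (fun q : ℝ => 1/(-Real.log q) + 1) l (𝓝 1) := by
        have h3 := (tendsto_const_nhds (x := (1:ℝ))).div_atTop hL
        simpa using h3.add (tendsto_const_nhds (x := (1:ℝ)))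
      have h4 : Tendsto (fun q : ℝ => (1-q)⁻¹) l (𝓝 1) := by
        have h5 := ((tendsto_const_nhds (x := (1:ℝ))).sub hq0).inv₀ (by norm_num)
        simpa using h5
      simpa using h2.mul h4
    apply h1.congr'
    filter_upwards [hIoo, hLpos] with q hq12 hLq
    obtain ⟨hq, hq2⟩ := hq12
    rw [hmdef, eq_comm]
    have hq1 : (1:ℝ) - q ≠ 0 := by linarith
    have hlq : Real.log q ≠ 0 := by intro h; rw [h] at hLq; simp at hLq
    field_simp
    ring
  -- hA : N/m → 1 by squeeze
  have hA : Tendsto (fun q => N q / m q) l (𝓝 1) := by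
    apply tendsto_of_tendsto_of_tendsto_of_le_of_le' hB hU
    · filter_upwards [hDN, hmpos] with q h1 h2
      exact div_le_div_of_nonneg_right h1 h2.le
    · filter_upwards [hNU, hmpos] with q h1 h2
      exact div_le_div_of_nonneg_right h1 h2.le
  -- conclude
  have hfin := hA.div hB one_ne_zero
  rw [div_one] at hfin
  apply hfin.congr'
  filter_upwards [hmpos] with q hmq
  simp only [Pi.div_apply]
  show N q / m q / (D q / m q) = N q / D q
  rcases eq_or_ne (D q) 0 with hD0 | hD0
  · rw [hD0, zero_div, div_zero, div_zero]
  · field_simp
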